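/- Let x̄ be a local optimal solution of the problem min f(x) subject to g(x) ∈ Λ, with f, g twice continuously differentiable and Λ closed. Suppose g(x) − Λ is metrically subregular at (x̄, 0) in a direction d belonging to the critical cone C(x̄) = {d : ∇g(x̄)d ∈ T_Λ(g(x̄)), ∇f(x̄)d ≤ 0}. Then ∇f(x̄)d = 0. -/

import Mathlib

open Filter Topology Pointwise RealInnerProductSpace

section Helpers
open Asymptotics
lemma aux_slope {E : Type*} [NormedAddCommGroup E] [NormedSpace ℝ E]
    {f : E → ℝ} {A : E →L[ℝ] ℝ} {xb : E} (hf : HasFDerivAt f A xb)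
    {t : ℕ → ℝ} {u : ℕ → E} {d : E} (ht : ∀ k, 0 < t k)
    (ht0 : Tendsto t atTop (𝓝 0)) (hu : Tendsto u atTop (𝓝 d)) :
    Tendsto (fun k => (f (xb + t k • u k) - f xb) / t k) atTop (𝓝 (A d)) := by
  have h0 : Tendsto (fun k => t k • u k) atTop (𝓝 (0 : E)) := by
    have := ht0.smul hu; simpa using this
  have h1 : Tendsto (fun k => xb + t k • u k) atTop (𝓝 xb) := by
    have := (tendsto_const_nhds (x := xb) (f := atTop)).add h0; simpa using this
  have h2 := (hf.isLittleO).comp_tendsto h1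
  simp only [Function.comp_def, add_sub_cancel_left] at h2
  have h3 : (fun k => t k • u k) =O[atTop] t := by
    rw [Asymptotics.isBigO_iff]
    refine ⟨‖d‖ + 1, ?_⟩
    filter_upwards [hu.norm.eventually_le_const (lt_add_one ‖d‖)] with k hk
    rw [norm_smul, Real.norm_eq_abs]
    nlinarith [abs_nonneg (t k), hk, norm_nonneg (u k)]
  have h4 := h2.trans_isBigO h3
  have h5 := h4.tendsto_div_nhds_zero
  have h6 : Tendsto (fun k => (f (xb + t k • u k) - f xb - A (t k • u k)) / t k + A (u k))
      atTop (𝓝 (0 + A d)) := h5.add ((A.continuous.tendsto d).comp hu)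
  rw [zero_add] at h6
  refine h6.congr fun k => ?_
  have htk := (ht k).ne'
  rw [map_smul, smul_eq_mul]
  field_simp
  ring

lemma aux_vec {E F : Type*} [NormedAddCommGroup E] [NormedSpace ℝ E]
    [NormedAddCommGroup F] [NormedSpace ℝ F]
    {g : E → F} {B : E →L[ℝ] F} {xb : E} (hg : HasFDerivAt g B xb)
    {t : ℕ → ℝ} {d : E} (ht : ∀ k, 0 < t k)
    (ht0 : Tendsto t atTop (𝓝 0)) :
    Tendsto (fun k => ‖g (xb + t k • d) - g xb - t k • B d‖ / t k) atTop (𝓝 0) := by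
  have h0 : Tendsto (fun k => t k • d) atTop (𝓝 (0 : E)) := by
    have := ht0.smul_const d; simpa using this
  have h1 : Tendsto (fun k => xb + t k • d) atTop (𝓝 xb) := by
    have := (tendsto_const_nhds (x := xb) (f := atTop)).add h0; simpa using this
  have h2 := (hg.isLittleO).comp_tendsto h1
  simp only [Function.comp_def, add_sub_cancel_left] at h2
  have h3 : (fun k => t k • d) =O[atTop] t := by
    rw [Asymptotics.isBigO_iff]
    refine ⟨‖d‖, Eventually.of_forall fun k => ?_⟩
    rw [norm_smul, Real.norm_eq_abs, mul_comm]
  have h4 := (h2.trans_isBigO h3).norm_left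
  have h5 := h4.tendsto_div_nhds_zero
  refine h5.congr fun k => ?_
  rw [map_smul]
end Helpers

section Defs
variable {E F : Type*}
variable [NormedAddCommGroup E] [InnerProductSpace ℝ E]
variable [NormedAddCommGroup F] [InnerProductSpace ℝ F]

/-- Bouligand (contingent) tangent cone, via sequences. -/
def tangentCone' (S : Set E) (x : E) : Set E :=
  {d | ∃ t : ℕ → ℝ, ∃ v : ℕ → E, (∀ k, 0 < t k) ∧ Tendsto t atTop (𝓝 0) ∧
    Tendsto v atTop (𝓝 d) ∧ ∀ k, x + t k • v k ∈ S}

/-- Outer second-order tangent set. -/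
def tangentCone2 (S : Set E) (x d : E) : Set E :=
  {w | ∃ t : ℕ → ℝ, ∃ v : ℕ → E, (∀ k, 0 < t k) ∧ Tendsto t atTop (𝓝 0) ∧
    Tendsto v atTop (𝓝 w) ∧ ∀ k, x + t k • d + ((t k)^2 / 2) • v k ∈ S}

/-- Regular (Fréchet) normal cone. -/
def frechetNormal (S : Set E) (x : E) : Set E :=
  {v | ∀ ε > (0:ℝ), ∃ δ > (0:ℝ), ∀ y ∈ S, ‖y - x‖ ≤ δ → ⟪v, y - x⟫ ≤ ε * ‖y - x‖}

/-- Limiting (Mordukhovich) normal cone. -/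
def limNormal (S : Set E) (x : E) : Set E :=
  {v | ∃ xk vk : ℕ → E, (∀ k, xk k ∈ S) ∧ Tendsto xk atTop (𝓝 x) ∧
    Tendsto vk atTop (𝓝 v) ∧ ∀ k, vk k ∈ frechetNormal S (xk k)}

/-- Directional limiting normal cone. -/
def dirLimNormal (S : Set E) (x d : E) : Set E :=
  {v | ∃ t : ℕ → ℝ, ∃ dk vk : ℕ → E, (∀ k, 0 < t k) ∧ Tendsto t atTop (𝓝 0) ∧
    Tendsto dk atTop (𝓝 d) ∧ Tendsto vk atTop (𝓝 v) ∧
    ∀ k, vk k ∈ frechetNormal S (x + t k • dk k)}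

/-- Directional regular (Clarke) tangent cone. -/
def dirRegTangent (S : Set E) (x d : E) : Set E :=
  {v | ∀ t : ℕ → ℝ, ∀ dk : ℕ → E, (∀ k, 0 < t k) → Tendsto t atTop (𝓝 0) →
    Tendsto dk atTop (𝓝 d) → (∀ k, x + t k • dk k ∈ S) →
    ∃ vk : ℕ → E, Tendsto vk atTop (𝓝 v) ∧ ∀ k, vk k ∈ tangentCone' S (x + t k • dk k)}

/-- Regular (Clarke) tangent cone, via sequences. -/
def clarkeTangent (S : Set E) (x : E) : Set E :=
  {v | ∀ t : ℕ → ℝ, ∀ xk : ℕ → E, (∀ k, 0 < t k) → Tendsto t atTop (𝓝 0) →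
    (∀ k, xk k ∈ S) → Tendsto xk atTop (𝓝 x) →
    ∃ vk : ℕ → E, Tendsto vk atTop (𝓝 v) ∧ ∀ k, xk k + t k • vk k ∈ S}

/-- Polar cone. -/
def polarCone (K : Set E) : Set E := {v | ∀ w ∈ K, ⟪v, w⟫ ≤ 0}

/-- Directional neighborhood V_{ρ,δ}(d). -/
def dirNbhd (ρ δ : ℝ) (d : E) : Set E :=
  {w | ‖w‖ < ρ ∧ ‖‖d‖ • w - ‖w‖ • d‖ ≤ δ * (‖w‖ * ‖d‖)}

/-- Metric subregularity of x ↦ g(x) - Λ at (x,0) in direction d. -/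
def dirMetrSubreg (g : E → F) (Λ : Set F) (x d : E) : Prop :=
  ∃ κ > (0:ℝ), ∃ ρ > (0:ℝ), ∃ δ > (0:ℝ), ∀ y : E, y - x ∈ dirNbhd ρ δ d →
    Metric.infDist y {z | g z ∈ Λ} ≤ κ * Metric.infDist (g y) Λ

/-- Metric subregularity in direction d with modulus κ. -/
def dirMetrSubregMod (g : E → F) (Λ : Set F) (x d : E) (κ : ℝ) : Prop :=
  ∀ κ' > κ, ∃ ρ > (0:ℝ), ∃ δ > (0:ℝ), ∀ y : E, y - x ∈ dirNbhd ρ δ d →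
    Metric.infDist y {z | g z ∈ Λ} ≤ κ' * Metric.infDist (g y) Λ

/-- Support function, with values in EReal. -/
noncomputable def suppFn (S : Set E) (l : E) : EReal :=
  sSup ((fun u => ((⟪l, u⟫ : ℝ) : EReal)) '' S)

/-- Lower generalized support function. -/
noncomputable def sigmaHat (S : Set E) (l : E) : EReal :=
  liminf (fun l' => sInf ((fun u => ((⟪l', u⟫ : ℝ) : EReal)) '' {u | l' ∈ limNormal S u})) (𝓝 l)

end Defs

theorem stmt_14 {n m : ℕ} (f : EuclideanSpace ℝ (Fin n) → ℝ)
    (g : EuclideanSpace ℝ (Fin n) → EuclideanSpace ℝ (Fin m))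
    (hf : ContDiff ℝ 2 f) (hg : ContDiff ℝ 2 g)
    (Λ : Set (EuclideanSpace ℝ (Fin m))) (hΛ : IsClosed Λ)
    (xb : EuclideanSpace ℝ (Fin n)) (hx : g xb ∈ Λ)
    (hmin : IsLocalMinOn f {x | g x ∈ Λ} xb)
    (d : EuclideanSpace ℝ (Fin n))
    (hd1 : fderiv ℝ g xb d ∈ tangentCone' Λ (g xb)) (hd2 : fderiv ℝ f xb d ≤ 0)
    (hM : dirMetrSubreg g Λ xb d) :
    fderiv ℝ f xb d = 0 := by
  rcases eq_or_ne d 0 with rfl | hd0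
  · simp
  refine le_antisymm hd2 (le_of_not_gt fun hlt => ?_)
  set S : Set (EuclideanSpace ℝ (Fin n)) := {x | g x ∈ Λ} with hS
  have hSne : S.Nonempty := ⟨xb, hx⟩
  set B := fderiv ℝ g xb with hB
  set A := fderiv ℝ f xb with hA
  obtain ⟨t, v, htpos, ht0, hv, hmem⟩ := hd1
  obtain ⟨κ, hκ, ρ, hρ, δ, hδ, hsub⟩ := hM
  have hfd : HasFDerivAt f A xb :=
    ((hf.differentiable two_ne_zero) xb).hasFDerivAt
  have hgd : HasFDerivAt g B xb :=
    ((hg.differentiable two_ne_zero) xb).hasFDerivAt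
  -- the error function
  set ε : ℕ → ℝ := fun k => ‖g (xb + t k • d) - g xb - t k • B d‖ / t k + ‖B d - v k‖ with hε
  have hεnn : ∀ k, 0 ≤ ε k := fun k =>
    add_nonneg (div_nonneg (norm_nonneg _) (htpos k).le) (norm_nonneg _)
  have hε0 : Tendsto ε atTop (𝓝 0) := by
    have h1 := aux_vec (d := d) hgd htpos ht0
    have h2 : Tendsto (fun k => ‖B d - v k‖) atTop (𝓝 0) := by
      have := (tendsto_const_nhds (x := B d) (f := atTop)).sub hv
      simpa using this.norm
    simpa using h1.add h2
  -- distance of g at the perturbed point to Λ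
  have hdist : ∀ k, Metric.infDist (g (xb + t k • d)) Λ ≤ t k * ε k := by
    intro k
    have h1 : Metric.infDist (g (xb + t k • d)) Λ ≤ dist (g (xb + t k • d)) (g xb + t k • v k) :=
      Metric.infDist_le_dist_of_mem (hmem k)
    refine h1.trans ?_
    rw [dist_eq_norm]
    have h2 : g (xb + t k • d) - (g xb + t k • v k)
        = (g (xb + t k • d) - g xb - t k • B d) + t k • (B d - v k) := by
      rw [smul_sub]; abel
    rw [h2]
    have h3 := norm_add_le (g (xb + t k • d) - g xb - t k • B d) (t k • (B d - v k))
    refine h3.trans ?_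
    rw [norm_smul, Real.norm_eq_abs, abs_of_pos (htpos k), hε]
    have htk := (htpos k).ne'
    field_simp
    ring_nf
    exact le_rfl
  -- eventual membership in the directional neighborhood
  have hnbhd : ∀ᶠ k in atTop, (xb + t k • d) - xb ∈ dirNbhd ρ δ d := by
    have h0 : Tendsto (fun k => ‖t k • d‖) atTop (𝓝 0) := by
      have : Tendsto (fun k => t k • d) atTop (𝓝 (0:EuclideanSpace ℝ (Fin n))) := by
        have := ht0.smul_const d; simpa using this
      simpa using this.norm
    filter_upwards [h0.eventually_lt_const hρ] with k hk
    constructor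
    · simpa using hk
    · have : ‖d‖ • (t k • d) - ‖t k • d‖ • d = 0 := by
        rw [norm_smul, Real.norm_eq_abs, abs_of_pos (htpos k), smul_smul,
          mul_comm ‖d‖ (t k), sub_self]
      rw [add_sub_cancel_left, this, norm_zero]
      positivity
  -- apply subregularity
  have hsub' : ∀ᶠ k in atTop, Metric.infDist (xb + t k • d) S ≤ κ * (t k * ε k) := by
    filter_upwards [hnbhd] with k hk
    calc Metric.infDist (xb + t k • d) S ≤ κ * Metric.infDist (g (xb + t k • d)) Λ :=
          hsub _ hk
      _ ≤ κ * (t k * ε k) := by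
          exact mul_le_mul_of_nonneg_left (hdist k) hκ.le
  -- choose nearly optimal feasible points
  set P : ℕ → Prop := fun k => ∃ y ∈ S, dist y (xb + t k • d) < κ * (t k * ε k) + t k * t k
    with hP
  have hPev : ∀ᶠ k in atTop, P k := by
    filter_upwards [hsub'] with k hk
    have h1 : Metric.infDist (xb + t k • d) S < κ * (t k * ε k) + t k * t k := by
      have := mul_pos (htpos k) (htpos k)
      linarith
    obtain ⟨y, hyS, hy⟩ := (Metric.infDist_lt_iff hSne).mp h1
    exact ⟨y, hyS, by rwa [dist_comm]⟩
  classical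
  set y : ℕ → EuclideanSpace ℝ (Fin n) := fun k => if h : P k then h.choose else xb with hy
  have hyS : ∀ k, y k ∈ S := by
    intro k
    by_cases h : P k
    · have h2 : y k = h.choose := by rw [hy]; simp only [dif_pos h]
      rw [h2]; exact h.choose_spec.1
    · have h2 : y k = xb := by rw [hy]; simp only [dif_neg h]
      rw [h2]; exact hx
  have hyd : ∀ᶠ k in atTop, dist (y k) (xb + t k • d) < κ * (t k * ε k) + t k * t k := by
    filter_upwards [hPev] with k hk
    rw [hy]; simp only [dif_pos hk]
    exact hk.choose_spec.2
  -- rescaled directions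
  set u : ℕ → EuclideanSpace ℝ (Fin n) := fun k => (t k)⁻¹ • (y k - xb) with hu'
  have hyu : ∀ k, xb + t k • u k = y k := by
    intro k
    rw [hu', smul_inv_smul₀ (htpos k).ne']
    abel
  have hu : Tendsto u atTop (𝓝 d) := by
    rw [tendsto_iff_norm_sub_tendsto_zero]
    have hbound : ∀ᶠ k in atTop, ‖u k - d‖ ≤ κ * ε k + t k := by
      filter_upwards [hyd] with k hk
      have htk := (htpos k).ne'
      have h1 : u k - d = (t k)⁻¹ • (y k - (xb + t k • d)) := by
        have e1 : y k - (xb + t k • d) = (y k - xb) - t k • d := by abel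
        show (t k)⁻¹ • (y k - xb) - d = _
        rw [e1, smul_sub ((t k)⁻¹) (y k - xb) (t k • d), inv_smul_smul₀ htk]
      rw [h1, norm_smul, Real.norm_eq_abs, abs_of_pos (inv_pos.mpr (htpos k))]
      have h2 : ‖y k - (xb + t k • d)‖ = dist (y k) (xb + t k • d) := (dist_eq_norm _ _).symm
      rw [h2]
      rw [inv_mul_le_iff₀ (htpos k)]
      calc dist (y k) (xb + t k • d) ≤ κ * (t k * ε k) + t k * t k := hk.le
        _ = (κ * ε k + t k) * t k := by ring
        _ = t k * (κ * ε k + t k) := by ring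
    have hrhs : Tendsto (fun k => κ * ε k + t k) atTop (𝓝 0) := by
      have := (hε0.const_mul κ).add ht0
      simpa using this
    exact squeeze_zero' (Eventually.of_forall fun k => norm_nonneg _) hbound hrhs
  -- the slope limit
  have hslope : Tendsto (fun k => (f (y k) - f xb) / t k) atTop (𝓝 (A d)) := by
    have := aux_slope hfd htpos ht0 hu
    refine this.congr fun k => ?_
    rw [hyu k]
  -- eventually f (y k) < f xb
  have hneg : ∀ᶠ k in atTop, f (y k) < f xb := by
    filter_upwards [hslope.eventually_lt_const hlt] with k hk
    have := div_neg_iff.mp hk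
    rcases this with ⟨h1, h2⟩ | ⟨h1, h2⟩
    · exact absurd h2 (not_lt.mpr (htpos k).le)
    · linarith
  -- y tends to xb within S
  have hytendsto : Tendsto y atTop (𝓝[S] xb) := by
    apply tendsto_nhdsWithin_of_tendsto_nhds_of_eventually_within
    · have h0 : Tendsto (fun k => t k • u k) atTop (𝓝 (0:EuclideanSpace ℝ (Fin n))) := by
        have := ht0.smul hu; simpa using this
      have : Tendsto (fun k => xb + t k • u k) atTop (𝓝 xb) := by
        have := (tendsto_const_nhds (x := xb) (f := atTop)).add h0; simpa using this
      refine this.congr fun k => hyu k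
    · exact Eventually.of_forall hyS
  have hge : ∀ᶠ k in atTop, f xb ≤ f (y k) := hytendsto.eventually hmin
  obtain ⟨k, h1, h2⟩ := (hge.and hneg).exists
  linarith
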